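/- With P_max defined as the chain-infimum of δ̂ as above, P_max(ρ,σ) ≥ (1/2)‖ρ − σ‖₁ for all density operators ρ, σ. In particular, combined with the upper bound, (1/2)‖ρ−σ‖₁ ≤ P_max(ρ,σ) ≤ ‖ρ−σ‖₁. -/

import Mathlib

open Matrix BigOperators ComplexOrder

variable {n : Type*} [Fintype n] [DecidableEq n]

/-- Trace norm (Schatten 1-norm) of a matrix. -/
noncomputable def traceNorm (A : Matrix n n ℂ) : ℝ :=
  let hA := (Matrix.posSemidef_conjTranspose_mul_self A).isHermitian
  ((hA.eigenvectorUnitary.1 * diagonal (((↑) : ℝ → ℂ) ∘ (√·) ∘ hA.eigenvalues) *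
    (star hA.eigenvectorUnitary : Matrix n n ℂ)).trace).re

/-- A density operator: positive semidefinite with trace 1. -/
def IsDensity (ρ : Matrix n n ℂ) : Prop := ρ.PosSemidef ∧ ρ.trace = 1

/-- δ̃(ρ,σ): smallest mixing weight ε with ρ = (1-ε)σ + εσ'. -/
noncomputable def deltaTilde (ρ σ : Matrix n n ℂ) : ℝ :=
  sInf {ε : ℝ | ε ∈ Set.Icc (0:ℝ) 1 ∧
    ∃ σ' : Matrix n n ℂ, IsDensity σ' ∧ ρ = (1 - ε) • σ + ε • σ'}

/-- δ̂ = min of δ̃ in both orders. -/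
noncomputable def deltaHat (ρ σ : Matrix n n ℂ) : ℝ :=
  min (deltaTilde ρ σ) (deltaTilde σ ρ)

/-- P_max: infimum over finite chains of density operators from ρ to σ of the
sum of δ̂ over consecutive pairs. -/
noncomputable def Pmax (ρ σ : Matrix n n ℂ) : ℝ :=
  sInf {s : ℝ | ∃ (m : ℕ) (ω : Fin (m + 1) → Matrix n n ℂ),
    ω 0 = ρ ∧ ω (Fin.last m) = σ ∧ (∀ i, IsDensity (ω i)) ∧
    s = ∑ i : Fin m, deltaHat (ω i.castSucc) (ω i.succ)}

namespace PmaxAux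
open Matrix

variable {H : Matrix n n ℂ} {hH : H.IsHermitian}

/-- Apply a real function to a Hermitian matrix via its spectral decomposition. -/
noncomputable def specFun (hH : H.IsHermitian) (f : ℝ → ℝ) : Matrix n n ℂ :=
  (hH.eigenvectorUnitary : Matrix n n ℂ) *
    diagonal (fun i => (f (hH.eigenvalues i) : ℂ)) *
    (star hH.eigenvectorUnitary : Matrix n n ℂ)

lemma specFun_posSemidef {f : ℝ → ℝ} (hf : ∀ x, 0 ≤ f x) : (specFun hH f).PosSemidef := by
  have hd : (diagonal (fun i => (f (hH.eigenvalues i) : ℂ))).PosSemidef := by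
    refine posSemidef_diagonal_iff.mpr fun i => ?_
    exact_mod_cast Complex.zero_le_real.mpr (hf _)
  simpa [specFun, Matrix.star_eq_conjTranspose] using
    hd.mul_mul_conjTranspose_same (hH.eigenvectorUnitary : Matrix n n ℂ)

lemma specFun_trace (f : ℝ → ℝ) :
    (specFun hH f).trace = ((∑ i, f (hH.eigenvalues i) : ℝ) : ℂ) := by
  have h1 : (star hH.eigenvectorUnitary : Matrix n n ℂ) * hH.eigenvectorUnitary = 1 :=
    Unitary.coe_star_mul_self _
  rw [specFun, Matrix.trace_mul_cycle, h1, Matrix.one_mul, Matrix.trace_diagonal]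
  push_cast
  rfl

lemma specFun_mul (f g : ℝ → ℝ) :
    specFun hH f * specFun hH g = specFun hH fun x => f x * g x := by
  have h1 : (star hH.eigenvectorUnitary : Matrix n n ℂ) * hH.eigenvectorUnitary = 1 :=
    Unitary.coe_star_mul_self _
  have h2 : ∀ X : Matrix n n ℂ, (star hH.eigenvectorUnitary : Matrix n n ℂ) *
      ((hH.eigenvectorUnitary : Matrix n n ℂ) * X) = X := fun X => by
    rw [← Matrix.mul_assoc, h1, Matrix.one_mul]
  simp only [specFun, Matrix.mul_assoc, h2]
  rw [← Matrix.mul_assoc (diagonal _) (diagonal _), diagonal_mul_diagonal]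
  push_cast
  rfl

lemma specFun_add (f g : ℝ → ℝ) :
    specFun hH f + specFun hH g = specFun hH fun x => f x + g x := by
  rw [specFun, specFun, specFun, ← Matrix.add_mul, ← Matrix.mul_add, diagonal_add]
  push_cast
  rfl

lemma specFun_sub (f g : ℝ → ℝ) :
    specFun hH f - specFun hH g = specFun hH fun x => f x - g x := by
  rw [specFun, specFun, specFun, ← Matrix.sub_mul, ← Matrix.mul_sub, diagonal_sub]
  push_cast
  rfl

lemma specFun_id : specFun hH (fun x => x) = H := by
  rw [specFun]; exact hH.spectral_theorem.symm

lemma traceNorm_eq_spec (A : Matrix n n ℂ) : traceNorm A =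
    (specFun (Matrix.posSemidef_conjTranspose_mul_self A).isHermitian Real.sqrt).trace.re := rfl

lemma sqrt_unique_aux {M B : Matrix n n ℂ} (hM : M.IsHermitian) (hB : B.PosSemidef)
    (h : B * B = M) : specFun hM Real.sqrt = B := by
  have e1 : specFun hM Real.sqrt = cfc Real.sqrt M := by
    rw [hM.cfc_eq, IsHermitian.cfc, Unitary.conjStarAlgAut_apply]; rfl
  have hBsa : IsSelfAdjoint B := hB.1
  rw [e1, ← h]
  have e2 : B * B = cfc (fun x : ℝ => x * x) B := by
    rw [cfc_mul (fun x : ℝ => x) (fun x : ℝ => x) B, cfc_id' ℝ B]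
  rw [e2, ← cfc_comp Real.sqrt (fun x : ℝ => x * x) B]
  conv_rhs => rw [← cfc_id' ℝ B]
  refine cfc_congr fun x hx => ?_
  rw [hB.1.spectrum_real_eq_range_eigenvalues] at hx
  obtain ⟨i, rfl⟩ := hx
  simp [Real.sqrt_mul_self (hB.eigenvalues_nonneg i)]

lemma sq_aux {M : Matrix n n ℂ} (hM : M.PosSemidef) :
    specFun hM.isHermitian Real.sqrt * specFun hM.isHermitian Real.sqrt = M := by
  rw [specFun_mul]
  conv_rhs => rw [← specFun_id (hH := hM.isHermitian)]
  simp only [specFun]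
  congr 3
  funext i
  rw [Real.mul_self_sqrt (hM.eigenvalues_nonneg i)]


section parts

variable {H : Matrix n n ℂ}

/-- positive part -/
noncomputable def posP (hH : H.IsHermitian) : Matrix n n ℂ := specFun hH fun x => max x 0
/-- negative part -/
noncomputable def negP (hH : H.IsHermitian) : Matrix n n ℂ := specFun hH fun x => max (-x) 0
/-- absolute value -/
noncomputable def absP (hH : H.IsHermitian) : Matrix n n ℂ := specFun hH fun x => |x|

lemma specFun_congr (hH : H.IsHermitian) {f g : ℝ → ℝ} (h : ∀ x, f x = g x) : specFun hH f = specFun hH g := by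
  simp only [specFun, funext h]

lemma posP_posSemidef (hH : H.IsHermitian) : (posP hH).PosSemidef :=
  specFun_posSemidef (fun x => le_max_right _ _)

lemma negP_posSemidef (hH : H.IsHermitian) : (negP hH).PosSemidef :=
  specFun_posSemidef (fun x => le_max_right _ _)

lemma absP_posSemidef (hH : H.IsHermitian) : (absP hH).PosSemidef :=
  specFun_posSemidef (fun x => abs_nonneg _)

lemma posP_sub_negP (hH : H.IsHermitian) : posP hH - negP hH = H := by
  rw [posP, negP, specFun_sub, specFun_congr hH (g := fun x => x)
    (fun x => max_zero_sub_max_neg_zero_eq_self x), specFun_id]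

lemma posP_add_negP (hH : H.IsHermitian) : posP hH + negP hH = absP hH := by
  rw [posP, negP, absP, specFun_add]
  refine specFun_congr hH fun x => ?_
  rcases le_total 0 x with h | h
  · simp [max_eq_left h, max_eq_right (neg_nonpos.mpr h), abs_of_nonneg h]
  · simp [max_eq_right h, max_eq_left (neg_nonneg.mpr h), abs_of_nonpos h]

lemma absP_trace (hH : H.IsHermitian) : (absP hH).trace = ((∑ i, |hH.eigenvalues i| : ℝ) : ℂ) :=
  specFun_trace (hH := hH) _

lemma posP_trace (hH : H.IsHermitian) : (posP hH).trace = ((∑ i, max (hH.eigenvalues i) 0 : ℝ) : ℂ) :=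
  specFun_trace (hH := hH) _

lemma negP_trace (hH : H.IsHermitian) : (negP hH).trace = ((∑ i, max (-hH.eigenvalues i) 0 : ℝ) : ℂ) :=
  specFun_trace (hH := hH) _

lemma trace_eq_sum_eigenvalues (hH : H.IsHermitian) : H.trace = ((∑ i, hH.eigenvalues i : ℝ) : ℂ) := by
  conv_lhs => rw [← specFun_id (hH := hH)]
  exact specFun_trace (hH := hH) _

lemma absP_eq_sqrt (hH : H.IsHermitian) : absP hH = specFun (Matrix.posSemidef_conjTranspose_mul_self H).isHermitian Real.sqrt := by
  refine (sqrt_unique_aux _ (absP_posSemidef hH) ?_).symm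
  rw [absP, specFun_mul, hH.eq]
  conv_rhs => rw [← specFun_id (hH := hH)]
  rw [specFun_mul]
  exact specFun_congr hH fun x => abs_mul_abs_self x

lemma traceNorm_herm (hH : H.IsHermitian) : traceNorm H = ∑ i, |hH.eigenvalues i| := by
  rw [traceNorm_eq_spec, ← absP_eq_sqrt hH, absP_trace hH, Complex.ofReal_re]

lemma traceNorm_herm_nonneg (hH : H.IsHermitian) : 0 ≤ traceNorm H := by
  rw [traceNorm_herm hH]
  exact Finset.sum_nonneg fun i _ => abs_nonneg _

lemma eq_zero_of_traceNorm_eq_zero (hH : H.IsHermitian) (h : traceNorm H = 0) : H = 0 := by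
  rw [traceNorm_herm hH] at h
  have h2 : ∀ i ∈ Finset.univ, |hH.eigenvalues i| = (0:ℝ) :=
    (Finset.sum_eq_zero_iff_of_nonneg fun i _ => abs_nonneg _).mp h
  have h3 : (fun i => ((hH.eigenvalues i : ℝ) : ℂ)) = fun _ => (0:ℂ) := by
    funext i
    exact_mod_cast congrArg Complex.ofReal (abs_eq_zero.mp (h2 i (Finset.mem_univ i)))
  conv_lhs => rw [← specFun_id (hH := hH)]
  rw [specFun, h3, diagonal_zero, Matrix.mul_zero, Matrix.zero_mul]

end parts


section more

lemma real_smul_matrix (c : ℝ) (A : Matrix n n ℂ) : c • A = (c : ℂ) • A := by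
  ext i j
  simp [Matrix.smul_apply, Complex.real_smul]

lemma posSemidef_real_smul {A : Matrix n n ℂ} (hA : A.PosSemidef) {c : ℝ} (hc : 0 ≤ c) :
    (c • A).PosSemidef := by
  rw [real_smul_matrix]
  refine PosSemidef.of_dotProduct_mulVec_nonneg ?_ fun x => ?_
  · rw [Matrix.IsHermitian, conjTranspose_smul, hA.1.eq]
    congr 1
    simp [Complex.ext_iff]
  · rw [smul_mulVec, dotProduct_smul, smul_eq_mul]
    exact mul_nonneg (Complex.zero_le_real.mpr hc) (hA.dotProduct_mulVec_nonneg x)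

lemma traceNorm_posSemidef {A : Matrix n n ℂ} (hA : A.PosSemidef) :
    traceNorm A = A.trace.re := by
  rw [traceNorm_herm hA.1, trace_eq_sum_eigenvalues hA.1, Complex.ofReal_re]
  exact Finset.sum_congr rfl fun i _ => abs_of_nonneg (hA.eigenvalues_nonneg i)

lemma traceNorm_density {ρ : Matrix n n ℂ} (h : IsDensity ρ) : traceNorm ρ = 1 := by
  rw [traceNorm_posSemidef h.1, h.2, Complex.one_re]

lemma traceNorm_neg (A : Matrix n n ℂ) : traceNorm (-A) = traceNorm A := by
  have hB := specFun_posSemidef (hH := (Matrix.posSemidef_conjTranspose_mul_self A).isHermitian)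
    (f := Real.sqrt) Real.sqrt_nonneg
  have h := sqrt_unique_aux (Matrix.posSemidef_conjTranspose_mul_self (-A)).isHermitian hB
    (by rw [sq_aux (Matrix.posSemidef_conjTranspose_mul_self A)]; simp)
  rw [traceNorm_eq_spec, traceNorm_eq_spec, h]

lemma traceNorm_real_smul (A : Matrix n n ℂ) {c : ℝ} (hc : 0 ≤ c) :
    traceNorm (c • A) = c * traceNorm A := by
  have hB := specFun_posSemidef (hH := (Matrix.posSemidef_conjTranspose_mul_self A).isHermitian)
    (f := Real.sqrt) Real.sqrt_nonneg
  have h : (c • specFun (Matrix.posSemidef_conjTranspose_mul_self A).isHermitian Real.sqrt) =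
      specFun (Matrix.posSemidef_conjTranspose_mul_self (c • A)).isHermitian Real.sqrt := by
    refine (sqrt_unique_aux _ (posSemidef_real_smul hB hc) ?_).symm
    rw [real_smul_matrix, real_smul_matrix c A, smul_mul_smul_comm,
      conjTranspose_smul, Matrix.smul_mul, Matrix.mul_smul, smul_smul,
      sq_aux (Matrix.posSemidef_conjTranspose_mul_self A)]
    congr 1
    simp [Complex.ext_iff]
  rw [traceNorm_eq_spec, ← h, Matrix.trace_smul, Complex.real_smul, Complex.re_ofReal_mul,
    traceNorm_eq_spec]

lemma sum_dot_eq_trace (M U : Matrix n n ℂ) (hU : U * star U = 1) :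
    ∑ i, star (fun x => U x i) ⬝ᵥ (M *ᵥ fun x => U x i) = M.trace := by
  have h : ∑ i, star (fun x => U x i) ⬝ᵥ (M *ᵥ fun x => U x i) = (star U * M * U).trace := by
    rw [Matrix.trace]
    refine (Finset.sum_congr rfl fun i _ => ?_).symm
    simp only [Matrix.diag_apply, Matrix.mul_apply, dotProduct, Matrix.mulVec,
      dotProduct, Pi.star_apply, Matrix.star_apply, Finset.sum_mul, Finset.mul_sum]
    rw [Finset.sum_comm]
    refine Finset.sum_congr rfl fun j _ => Finset.sum_congr rfl fun k _ => ?_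
    ring
  rw [h, Matrix.trace_mul_cycle, hU, Matrix.one_mul]

lemma abs_re_dot_le_absP {A : Matrix n n ℂ} (hA : A.IsHermitian) (v : n → ℂ) :
    |Complex.re (star v ⬝ᵥ (A *ᵥ v))| ≤ Complex.re (star v ⬝ᵥ (absP hA *ᵥ v)) := by
  have h1 : (absP hA - A).PosSemidef := by
    have e := specFun_sub (hH := hA) (fun x => |x|) fun x => x
    rw [specFun_id] at e
    rw [absP, e]
    exact specFun_posSemidef fun x => sub_nonneg.mpr (le_abs_self x)
  have h2 : (absP hA + A).PosSemidef := by
    have e := specFun_add (hH := hA) (fun x => |x|) fun x => x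
    rw [specFun_id] at e
    rw [absP, e]
    exact specFun_posSemidef fun x => by linarith [neg_abs_le x]
  have g1 := h1.re_dotProduct_nonneg v
  have g2 := h2.re_dotProduct_nonneg v
  rw [Matrix.sub_mulVec, dotProduct_sub, map_sub] at g1
  rw [Matrix.add_mulVec, dotProduct_add, map_add] at g2
  simp only [RCLike.re_to_complex] at g1 g2
  rw [abs_le]
  constructor <;> linarith

end more

section triangle

lemma traceNorm_eq_absP_trace_re {A : Matrix n n ℂ} (hA : A.IsHermitian) :
    traceNorm A = (absP hA).trace.re := by
  rw [absP_trace hA, Complex.ofReal_re, traceNorm_herm hA]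

lemma traceNorm_triangle {A B : Matrix n n ℂ} (hA : A.IsHermitian) (hB : B.IsHermitian) :
    traceNorm (A + B) ≤ traceNorm A + traceNorm B := by
  have hC : (A + B).IsHermitian := hA.add hB
  have hunit : (hC.eigenvectorUnitary : Matrix n n ℂ) *
      star (hC.eigenvectorUnitary : Matrix n n ℂ) = 1 := Unitary.coe_mul_star_self _
  have hvec : ∀ i, ⇑(hC.eigenvectorBasis i) =
      fun x => (hC.eigenvectorUnitary : Matrix n n ℂ) x i := fun i => rfl
  have key : ∀ i, |hC.eigenvalues i| ≤
      Complex.re (star (fun x => (hC.eigenvectorUnitary : Matrix n n ℂ) x i) ⬝ᵥ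
        (absP hA *ᵥ fun x => (hC.eigenvectorUnitary : Matrix n n ℂ) x i)) +
      Complex.re (star (fun x => (hC.eigenvectorUnitary : Matrix n n ℂ) x i) ⬝ᵥ
        (absP hB *ᵥ fun x => (hC.eigenvectorUnitary : Matrix n n ℂ) x i)) := by
    intro i
    have he := hC.eigenvalues_eq i
    rw [hvec i] at he
    rw [he, Matrix.add_mulVec, dotProduct_add, map_add]
    simp only [RCLike.re_to_complex]
    refine (abs_add_le _ _).trans (add_le_add ?_ ?_)
    · exact abs_re_dot_le_absP hA _
    · exact abs_re_dot_le_absP hB _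
  calc traceNorm (A + B) = ∑ i, |hC.eigenvalues i| := traceNorm_herm hC
    _ ≤ ∑ i, (Complex.re (star (fun x => (hC.eigenvectorUnitary : Matrix n n ℂ) x i) ⬝ᵥ
          (absP hA *ᵥ fun x => (hC.eigenvectorUnitary : Matrix n n ℂ) x i)) +
        Complex.re (star (fun x => (hC.eigenvectorUnitary : Matrix n n ℂ) x i) ⬝ᵥ
          (absP hB *ᵥ fun x => (hC.eigenvectorUnitary : Matrix n n ℂ) x i))) :=
      Finset.sum_le_sum fun i _ => key i
    _ = (∑ i, star (fun x => (hC.eigenvectorUnitary : Matrix n n ℂ) x i) ⬝ᵥ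
          (absP hA *ᵥ fun x => (hC.eigenvectorUnitary : Matrix n n ℂ) x i)).re +
        (∑ i, star (fun x => (hC.eigenvectorUnitary : Matrix n n ℂ) x i) ⬝ᵥ
          (absP hB *ᵥ fun x => (hC.eigenvectorUnitary : Matrix n n ℂ) x i)).re := by
      rw [Finset.sum_add_distrib, Complex.re_sum, Complex.re_sum]
    _ = traceNorm A + traceNorm B := by
      rw [sum_dot_eq_trace _ _ hunit, sum_dot_eq_trace _ _ hunit,
        traceNorm_eq_absP_trace_re hA, traceNorm_eq_absP_trace_re hB]

lemma traceNorm_zero : traceNorm (0 : Matrix n n ℂ) = 0 := by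
  rw [traceNorm_posSemidef Matrix.PosSemidef.zero]
  simp

lemma traceNorm_chain {m : ℕ} (ω : Fin (m + 1) → Matrix n n ℂ)
    (h : ∀ i, (ω i).IsHermitian) :
    traceNorm (ω 0 - ω (Fin.last m)) ≤
      ∑ i : Fin m, traceNorm (ω i.castSucc - ω i.succ) := by
  induction m with
  | zero => simp [Fin.last, traceNorm_zero]
  | succ m ih =>
    have h1 := ih (fun i => ω i.castSucc) fun i => h _
    simp only [Fin.castSucc_zero] at h1
    calc traceNorm (ω 0 - ω (Fin.last (m + 1)))
        = traceNorm ((ω 0 - ω ((Fin.last m).castSucc)) +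
            (ω ((Fin.last m).castSucc) - ω (Fin.last (m + 1)))) := by rw [sub_add_sub_cancel]
      _ ≤ traceNorm (ω 0 - ω ((Fin.last m).castSucc)) +
            traceNorm (ω ((Fin.last m).castSucc) - ω (Fin.last (m + 1))) :=
          traceNorm_triangle ((h _).sub (h _)) ((h _).sub (h _))
      _ ≤ (∑ i : Fin m, traceNorm (ω i.castSucc.castSucc - ω i.succ.castSucc)) +
            traceNorm (ω ((Fin.last m).castSucc) - ω (Fin.last (m + 1))) :=
          add_le_add_left h1 _
      _ = ∑ i : Fin (m + 1), traceNorm (ω i.castSucc - ω i.succ) := by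
          rw [Fin.sum_univ_castSucc]
          simp [Fin.succ_last]

end triangle


section delta

lemma deltaTilde_nonneg (ρ σ : Matrix n n ℂ) : 0 ≤ deltaTilde ρ σ :=
  Real.sInf_nonneg fun _ hx => hx.1.1

lemma deltaHat_nonneg (ρ σ : Matrix n n ℂ) : 0 ≤ deltaHat ρ σ :=
  le_min (deltaTilde_nonneg _ _) (deltaTilde_nonneg _ _)

lemma traceNorm_sub_le_two {ρ σ : Matrix n n ℂ} (hρ : IsDensity ρ) (hσ : IsDensity σ) :
    traceNorm (ρ - σ) ≤ 2 := by
  calc traceNorm (ρ - σ) = traceNorm (ρ + -σ) := by rw [sub_eq_add_neg]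
    _ ≤ traceNorm ρ + traceNorm (-σ) := traceNorm_triangle hρ.1.1 hσ.1.1.neg
    _ = 2 := by rw [traceNorm_density hρ, traceNorm_neg, traceNorm_density hσ]; norm_num

lemma traceNorm_sub_comm (ρ σ : Matrix n n ℂ) : traceNorm (ρ - σ) = traceNorm (σ - ρ) := by
  rw [← traceNorm_neg, neg_sub]

lemma half_traceNorm_le_deltaTilde {ρ σ : Matrix n n ℂ} (hρ : IsDensity ρ) (hσ : IsDensity σ) :
    (1 / 2) * traceNorm (ρ - σ) ≤ deltaTilde ρ σ := by
  refine le_csInf ⟨1, ⟨zero_le_one, le_refl 1⟩, ρ, hρ, by simp⟩ fun ε hε => ?_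
  obtain ⟨⟨hε0, _⟩, σ', hσ', heq⟩ := hε
  have hd : ρ - σ = ε • (σ' - σ) := by
    rw [heq, sub_smul, one_smul, smul_sub]; abel
  have hb : traceNorm (σ' - σ) ≤ 2 := traceNorm_sub_le_two hσ' hσ
  rw [hd, traceNorm_real_smul (σ' - σ) hε0]
  nlinarith [traceNorm_herm_nonneg (hσ'.1.1.sub hσ.1.1)]

lemma half_traceNorm_le_deltaHat {ρ σ : Matrix n n ℂ} (hρ : IsDensity ρ) (hσ : IsDensity σ) :
    (1 / 2) * traceNorm (ρ - σ) ≤ deltaHat ρ σ := by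
  refine le_min (half_traceNorm_le_deltaTilde hρ hσ) ?_
  rw [traceNorm_sub_comm]
  exact half_traceNorm_le_deltaTilde hσ hρ

end delta


section pmax

lemma pmax_bddBelow (ρ σ : Matrix n n ℂ) :
    BddBelow {s : ℝ | ∃ (m : ℕ) (ω : Fin (m + 1) → Matrix n n ℂ),
      ω 0 = ρ ∧ ω (Fin.last m) = σ ∧ (∀ i, IsDensity (ω i)) ∧
      s = ∑ i : Fin m, deltaHat (ω i.castSucc) (ω i.succ)} := by
  refine ⟨0, fun s hs => ?_⟩
  obtain ⟨m, ω, _, _, _, rfl⟩ := hs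
  exact Finset.sum_nonneg fun i _ => deltaHat_nonneg _ _

lemma half_traceNorm_le_pmax {ρ σ : Matrix n n ℂ} (hρ : IsDensity ρ) (hσ : IsDensity σ) :
    (1 / 2) * traceNorm (ρ - σ) ≤ Pmax ρ σ := by
  refine le_csInf ⟨deltaHat ρ σ, 1, ![ρ, σ], by simp, by simp [Fin.last], ?_, by simp⟩
    fun s hs => ?_
  · intro i
    fin_cases i
    · simpa using hρ
    · simpa using hσ
  · obtain ⟨m, ω, h0, hl, hd, rfl⟩ := hs
    have hc := traceNorm_chain ω fun i => (hd i).1.1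
    calc (1 / 2) * traceNorm (ρ - σ)
        = (1 / 2) * traceNorm (ω 0 - ω (Fin.last m)) := by rw [h0, hl]
      _ ≤ (1 / 2) * ∑ i : Fin m, traceNorm (ω i.castSucc - ω i.succ) := by linarith
      _ = ∑ i : Fin m, (1 / 2) * traceNorm (ω i.castSucc - ω i.succ) := Finset.mul_sum _ _ _
      _ ≤ ∑ i : Fin m, deltaHat (ω i.castSucc) (ω i.succ) :=
          Finset.sum_le_sum fun i _ => half_traceNorm_le_deltaHat (hd _) (hd _)

lemma deltaTilde_bddBelow (ρ σ : Matrix n n ℂ) :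
    BddBelow {ε : ℝ | ε ∈ Set.Icc (0:ℝ) 1 ∧
      ∃ σ' : Matrix n n ℂ, IsDensity σ' ∧ ρ = (1 - ε) • σ + ε • σ'} :=
  ⟨0, fun _ hx => hx.1.1⟩

lemma pmax_le_traceNorm {ρ σ : Matrix n n ℂ} (hρ : IsDensity ρ) (hσ : IsDensity σ) :
    Pmax ρ σ ≤ traceNorm (ρ - σ) := by
  set Δ : Matrix n n ℂ := ρ - σ with hΔdef
  have hΔ : Δ.IsHermitian := hρ.1.1.sub hσ.1.1
  set T : ℝ := (1 / 2) * traceNorm Δ with hTdef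
  have htr : Δ.trace = 0 := by rw [hΔdef, Matrix.trace_sub, hρ.2, hσ.2, sub_self]
  have hsum0 : ∑ i, hΔ.eigenvalues i = 0 := by
    have := trace_eq_sum_eigenvalues hΔ
    rw [htr] at this
    exact_mod_cast this.symm
  have htn : traceNorm Δ = ∑ i, |hΔ.eigenvalues i| := traceNorm_herm hΔ
  have hpos_sum : ∑ i, max (hΔ.eigenvalues i) 0 = T := by
    have h : ∀ i ∈ Finset.univ, max (hΔ.eigenvalues i) 0 =
        (|hΔ.eigenvalues i| + hΔ.eigenvalues i) / 2 := fun i _ => by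
      rcases le_total 0 (hΔ.eigenvalues i) with h | h
      · rw [max_eq_left h, abs_of_nonneg h]; ring
      · rw [max_eq_right h, abs_of_nonpos h]; ring
    rw [Finset.sum_congr rfl h, ← Finset.sum_div, Finset.sum_add_distrib, hsum0, add_zero,
      hTdef, htn]
    ring
  have hneg_sum : ∑ i, max (-hΔ.eigenvalues i) 0 = T := by
    have h : ∀ i ∈ Finset.univ, max (-hΔ.eigenvalues i) 0 =
        (|hΔ.eigenvalues i| - hΔ.eigenvalues i) / 2 := fun i _ => by
      rcases le_total 0 (hΔ.eigenvalues i) with h | h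
      · rw [max_eq_right (neg_nonpos.mpr h), abs_of_nonneg h]; ring
      · rw [max_eq_left (neg_nonneg.mpr h), abs_of_nonpos h]; ring
    rw [Finset.sum_congr rfl h, ← Finset.sum_div, Finset.sum_sub_distrib, hsum0, sub_zero,
      hTdef, htn]
    ring
  have hptr : (posP hΔ).trace = ((T : ℝ) : ℂ) := by rw [posP_trace hΔ, hpos_sum]
  have hntr : (negP hΔ).trace = ((T : ℝ) : ℂ) := by rw [negP_trace hΔ, hneg_sum]
  have hT0 : 0 ≤ T := by
    rw [hTdef]
    have := traceNorm_herm_nonneg hΔ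
    linarith
  have hT1 : T ≤ 1 := by
    have := traceNorm_sub_le_two hρ hσ
    rw [← hΔdef] at this
    rw [hTdef]
    linarith
  by_cases hT : T = 0
  -- Case ρ = σ : use the trivial chain of length 0
  · have hΔ0 : Δ = 0 := eq_zero_of_traceNorm_eq_zero hΔ (by rw [hTdef] at hT; linarith)
    have hρσ : ρ = σ := by rwa [hΔdef, sub_eq_zero] at hΔ0
    have h0 : (0:ℝ) ∈ {s : ℝ | ∃ (m : ℕ) (ω : Fin (m + 1) → Matrix n n ℂ),
        ω 0 = ρ ∧ ω (Fin.last m) = σ ∧ (∀ i, IsDensity (ω i)) ∧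
        s = ∑ i : Fin m, deltaHat (ω i.castSucc) (ω i.succ)} := by
      refine ⟨0, fun _ => ρ, rfl, hρσ.symm ▸ rfl, fun _ => hρ, by simp⟩
    have := csInf_le (pmax_bddBelow ρ σ) h0
    have h2 : 0 ≤ traceNorm Δ := traceNorm_herm_nonneg hΔ
    rw [Pmax]
    linarith
  -- Main case
  · have hTpos : 0 < T := lt_of_le_of_ne hT0 (Ne.symm hT)
    set ρ' : Matrix n n ℂ := (1 - T) • ρ + negP hΔ with hρ'def
    have hρ'psd : ρ'.PosSemidef :=
      (posSemidef_real_smul hρ.1 (by linarith)).add (negP_posSemidef hΔ)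
    have hρ'tr : ρ'.trace = 1 := by
      rw [hρ'def, Matrix.trace_add, Matrix.trace_smul, hρ.2, hntr, Complex.real_smul]
      push_cast
      ring
    have hρ'dens : IsDensity ρ' := ⟨hρ'psd, hρ'tr⟩
    -- step 1 : deltaTilde ρ' ρ ≤ T
    have st1 : deltaTilde ρ' ρ ≤ T := by
      refine csInf_le (deltaTilde_bddBelow _ _) ⟨⟨hT0, hT1⟩, T⁻¹ • negP hΔ, ⟨?_, ?_⟩, ?_⟩
      · exact posSemidef_real_smul (negP_posSemidef hΔ) (inv_nonneg.mpr hT0)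
      · rw [Matrix.trace_smul, hntr, Complex.real_smul]
        push_cast
        field_simp
      · rw [smul_smul, mul_inv_cancel₀ hT, one_smul, hρ'def]
    -- step 2 : deltaTilde ρ' σ ≤ T
    have hposP : posP hΔ = ρ - σ + negP hΔ := by
      linear_combination (norm := module) posP_sub_negP hΔ + hΔdef
    have st2 : deltaTilde ρ' σ ≤ T := by
      refine csInf_le (deltaTilde_bddBelow _ _)
        ⟨⟨hT0, hT1⟩, T⁻¹ • ((1 - T) • posP hΔ + T • negP hΔ), ⟨?_, ?_⟩, ?_⟩
      · exact posSemidef_real_smul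
          (((posSemidef_real_smul (posP_posSemidef hΔ) (by linarith))).add
            (posSemidef_real_smul (negP_posSemidef hΔ) hT0)) (inv_nonneg.mpr hT0)
      · rw [Matrix.trace_smul, Matrix.trace_add, Matrix.trace_smul, Matrix.trace_smul,
          hptr, hntr]
        rw [← add_smul, show (1 - T) + T = 1 by ring, one_smul, Complex.real_smul,
          ← Complex.ofReal_mul, inv_mul_cancel₀ hT, Complex.ofReal_one]
      · rw [smul_smul, mul_inv_cancel₀ hT, one_smul]
        rw [hρ'def, hposP]
        module
    -- assemble the chain ρ → ρ' → σ
    have hmem : deltaHat ρ ρ' + deltaHat ρ' σ ∈ {s : ℝ |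
        ∃ (m : ℕ) (ω : Fin (m + 1) → Matrix n n ℂ),
        ω 0 = ρ ∧ ω (Fin.last m) = σ ∧ (∀ i, IsDensity (ω i)) ∧
        s = ∑ i : Fin m, deltaHat (ω i.castSucc) (ω i.succ)} := by
      refine ⟨2, ![ρ, ρ', σ], by simp, by simp [Fin.last], ?_, ?_⟩
      · intro i
        fin_cases i
        · simpa using hρ
        · simpa using hρ'dens
        · simpa using hσ
      · rw [Fin.sum_univ_two]
        norm_num [Fin.succ_zero_eq_one]
        rfl
    have hle := csInf_le (pmax_bddBelow ρ σ) hmem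
    have h1 : deltaHat ρ ρ' ≤ T := le_trans (min_le_right _ _) st1
    have h2 : deltaHat ρ' σ ≤ T := le_trans (min_le_left _ _) st2
    rw [Pmax]
    rw [hTdef] at h1 h2
    linarith

end pmax

end PmaxAux

theorem Pmax_traceNorm_bounds (ρ σ : Matrix n n ℂ)
    (hρ : IsDensity ρ) (hσ : IsDensity σ) :
    (1 / 2) * traceNorm (ρ - σ) ≤ Pmax ρ σ ∧ Pmax ρ σ ≤ traceNorm (ρ - σ) :=
  ⟨PmaxAux.half_traceNorm_le_pmax hρ hσ, PmaxAux.pmax_le_traceNorm hρ hσ⟩
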